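/- Every d-polytope P is weakly (i, i+1)-scribable for each 0 ≤ i ≤ d-2: P admits a realization in Euclidean space E^d together with an ellipsoid E (equivalently, after an affine transformation, the unit sphere) such that the affine span of every (i+1)-face of P meets the closed ball bounded by E, while the affine span of every i-face is disjoint from the open ball. -/

import Mathlib

open Module Submodule

lemma aux_notmem {Vc : Type*} [AddCommGroup Vc] [Module ℝ Vc]
    (𝒟 : Finset (Submodule ℝ Vc)) (h : ∀ D ∈ 𝒟, D ≠ ⊤) :
    ∃ v : Vc, ∀ D ∈ 𝒟, v ∉ D := by
  classical
  induction 𝒟 using Finset.induction with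
  | empty => exact ⟨0, by simp⟩
  | @insert D₀ 𝒟' hni ih =>
    obtain ⟨v, hv⟩ := ih (fun D hD => h D (Finset.mem_insert_of_mem hD))
    by_cases hv0 : v ∈ D₀
    · have hD₀ : D₀ ≠ ⊤ := h D₀ (Finset.mem_insert_self _ _)
      obtain ⟨u, -, hu⟩ := SetLike.exists_of_lt hD₀.lt_top
      -- bad set of parameters
      have hbad : ∀ D ∈ insert D₀ 𝒟', {t : ℝ | v + t • u ∈ D}.Subsingleton := by
        intro D hD t₁ ht₁ t₂ ht₂
        simp only [Set.mem_setOf_eq] at ht₁ ht₂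
        rcases Finset.mem_insert.1 hD with rfl | hD'
        · -- v ∈ D₀, u ∉ D₀
          by_contra hne
          have : (t₁ - t₂) • u ∈ D := by
            have := D.sub_mem ht₁ ht₂
            simpa [sub_smul, add_sub_add_left_eq_sub] using this
          exact hu (by
            have := D.smul_mem (t₁ - t₂)⁻¹ this
            rwa [smul_smul, inv_mul_cancel₀ (sub_ne_zero.2 hne), one_smul] at this)
        · -- v ∉ D
          by_contra hne
          have hsub : (t₁ - t₂) • u ∈ D := by
            have := D.sub_mem ht₁ ht₂
            simpa [sub_smul, add_sub_add_left_eq_sub] using this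
          have huD : u ∈ D := by
            have := D.smul_mem (t₁ - t₂)⁻¹ hsub
            rwa [smul_smul, inv_mul_cancel₀ (sub_ne_zero.2 hne), one_smul] at this
          exact hv D hD' (by
            have := D.sub_mem ht₁ (D.smul_mem t₁ huD)
            simpa using this)
      have hfin : (⋃ D ∈ (insert D₀ 𝒟' : Finset (Submodule ℝ Vc)),
          {t : ℝ | v + t • u ∈ D}).Finite :=
        Set.Finite.biUnion (Finset.finite_toSet _)
          (fun D hD => ((hbad D hD).finite))
      obtain ⟨t, ht⟩ := (hfin.infinite_compl).nonempty
      refine ⟨v + t • u, fun D hD hmem => ht ?_⟩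
      exact Set.mem_biUnion hD hmem
    ·
      refine ⟨v, fun D hD => ?_⟩
      rcases Finset.mem_insert.1 hD with rfl | hD'
      · exact hv0
      · exact hv D hD'

lemma aux_subspace {Vc : Type*} [NormedAddCommGroup Vc] [NormedSpace ℝ Vc]
    [FiniteDimensional ℝ Vc]
    (𝒟 : Finset (Submodule ℝ Vc)) (m : ℕ) (hm : m ≤ finrank ℝ Vc)
    (h : ∀ D ∈ 𝒟, finrank ℝ D + m ≤ finrank ℝ Vc) :
    ∃ W : Submodule ℝ Vc, finrank ℝ W = m ∧ ∀ D ∈ 𝒟, D ⊓ W = ⊥ := by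
  classical
  induction m with
  | zero => exact ⟨⊥, finrank_bot ℝ Vc, fun D _ => inf_bot_eq D⟩
  | succ m ih =>
    obtain ⟨W, hWrank, hWdisj⟩ := ih (le_trans (Nat.le_succ m) hm)
      (fun D hD => by have := h D hD; omega)
    set ℱ : Finset (Submodule ℝ Vc) := insert W (𝒟.image (fun D => D ⊔ W)) with hℱ
    have hne : ∀ D' ∈ ℱ, D' ≠ ⊤ := by
      intro D' hD'
      rcases Finset.mem_insert.1 hD' with rfl | hD'
      · intro htop
        rw [htop, finrank_top] at hWrank
        omega
      · obtain ⟨D, hD, rfl⟩ := Finset.mem_image.1 hD'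
        intro htop
        have hr : finrank ℝ (D ⊔ W : Submodule ℝ Vc) + finrank ℝ (D ⊓ W : Submodule ℝ Vc)
            = finrank ℝ D + finrank ℝ W := Submodule.finrank_sup_add_finrank_inf_eq D W
        rw [hWdisj D hD, htop, finrank_top, finrank_bot] at hr
        have := h D hD
        omega
    obtain ⟨v, hv⟩ := aux_notmem ℱ hne
    have hvW : v ∉ W := hv W (Finset.mem_insert_self _ _)
    have hv0 : v ≠ 0 := fun h0 => hvW (h0 ▸ W.zero_mem)
    refine ⟨W ⊔ ℝ ∙ v, ?_, ?_⟩
    · have hinf : W ⊓ (ℝ ∙ v) = ⊥ := by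
        rw [eq_bot_iff]
        rintro x ⟨hxW, hxv⟩
        obtain ⟨a, rfl⟩ := Submodule.mem_span_singleton.1 hxv
        rcases eq_or_ne a 0 with rfl | ha
        · simp
        · exact absurd (by simpa [smul_smul, inv_mul_cancel₀ ha] using W.smul_mem a⁻¹ hxW) hvW
      have hr : finrank ℝ (W ⊔ ℝ ∙ v : Submodule ℝ Vc) + finrank ℝ (W ⊓ (ℝ ∙ v) : Submodule ℝ Vc)
          = finrank ℝ W + finrank ℝ (ℝ ∙ v : Submodule ℝ Vc) :=
        Submodule.finrank_sup_add_finrank_inf_eq W (ℝ ∙ v)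
      rw [hinf, finrank_bot, finrank_span_singleton hv0, hWrank] at hr
      omega
    · intro D hD
      rw [eq_bot_iff]
      rintro x ⟨hxD, hxs⟩
      obtain ⟨w, hw, y, hy, rfl⟩ := Submodule.mem_sup.1 hxs
      obtain ⟨a, rfl⟩ := Submodule.mem_span_singleton.1 hy
      rcases eq_or_ne a 0 with rfl | ha
      · have : w ∈ D ⊓ W := ⟨by simpa using hxD, hw⟩
        rw [hWdisj D hD] at this
        simpa using this
      · exfalso
        apply hv (D ⊔ W) (Finset.mem_insert_of_mem (Finset.mem_image_of_mem _ hD))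
        have hx : w + a • v ∈ D ⊔ W := Submodule.mem_sup_left hxD
        have : a • v ∈ D ⊔ W := by
          have := Submodule.sub_mem _ hx (Submodule.mem_sup_right hw)
          simpa using this
        have := Submodule.smul_mem _ a⁻¹ this
        rwa [smul_smul, inv_mul_cancel₀ ha, one_smul] at this

lemma aux_up {α : Type*} (s : Finset α) (p : α → ℝ → Prop)
    (h : ∀ a ∈ s, ∃ δ : ℝ, ∀ ε, δ ≤ ε → p a ε) :
    ∃ ε : ℝ, 0 < ε ∧ ∀ a ∈ s, ∀ ε', ε ≤ ε' → p a ε' := by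
  classical
  induction s using Finset.induction with
  | empty => exact ⟨1, one_pos, by simp⟩
  | @insert a s hni ih =>
    obtain ⟨ε, hε, hs⟩ := ih (fun b hb => h b (Finset.mem_insert_of_mem hb))
    obtain ⟨δ, hδ⟩ := h a (Finset.mem_insert_self _ _)
    refine ⟨max ε δ, lt_max_of_lt_left hε, fun b hb ε' hε' => ?_⟩
    rcases Finset.mem_insert.1 hb with rfl | hb
    · exact hδ ε' (le_trans (le_max_right _ _) hε')
    · exact hs b hb ε' (le_trans (le_max_left _ _) hε')

lemma aux_down {α : Type*} (s : Finset α) (p : α → ℝ → Prop)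
    (h : ∀ a ∈ s, ∃ δ : ℝ, 0 < δ ∧ ∀ ε, 0 < ε → ε ≤ δ → p a ε) :
    ∃ ε : ℝ, 0 < ε ∧ ∀ a ∈ s, ∀ ε', 0 < ε' → ε' ≤ ε → p a ε' := by
  classical
  induction s using Finset.induction with
  | empty => exact ⟨1, one_pos, by simp⟩
  | @insert a s hni ih =>
    obtain ⟨ε, hε, hs⟩ := ih (fun b hb => h b (Finset.mem_insert_of_mem hb))
    obtain ⟨δ, hδpos, hδ⟩ := h a (Finset.mem_insert_self _ _)
    refine ⟨min ε δ, lt_min hε hδpos, fun b hb ε' hε'pos hε' => ?_⟩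
    rcases Finset.mem_insert.1 hb with rfl | hb
    · exact hδ ε' hε'pos (le_trans hε' (min_le_right _ _))
    · exact hs b hb ε' hε'pos (le_trans hε' (min_le_left _ _))

lemma aux_extreme_sub {E : Type*} [AddCommGroup E] [Module ℝ E]
    (V : Finset E) (F : Set E)
    (hF : IsExtreme ℝ (convexHull ℝ (V : Set E)) F) :
    F ⊆ convexHull ℝ ((V : Set E) ∩ F) := by
  classical
  have claim : ∀ t : Finset E, (t : Set E) ⊆ (V : Set E) → ∀ w : E → ℝ,
      (∀ y ∈ t, 0 < w y) → ∀ x ∈ F, t.centerMass w id = x → (t : Set E) ⊆ F := by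
    intro t
    induction t using Finset.induction with
    | empty => intro _ _ _ _ _ _; simp
    | @insert a t hna ih =>
      intro hsub w hw x hx hcm
      have haV : a ∈ (V : Set E) := hsub (by simp)
      by_cases hte : t = ∅
      · subst hte
        have : ({a} : Finset E).centerMass w id = x := by simpa using hcm
        rw [Finset.centerMass_singleton (z := id) (i := a) (ne_of_gt (hw a (by simp)))] at this
        simp only [id_eq] at this
        subst this
        simpa using hx
      · have htne : t.Nonempty := Finset.nonempty_of_ne_empty hte
        have hspos : 0 < ∑ j ∈ t, w j :=
          Finset.sum_pos (fun j hj => hw j (Finset.mem_insert_of_mem hj)) htne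
        have hwa : 0 < w a := hw a (Finset.mem_insert_self _ _)
        have htot : 0 < w a + ∑ j ∈ t, w j := by linarith
        set y := t.centerMass w id with hy
        have hcm' : (w a / (w a + ∑ j ∈ t, w j)) • a
            + ((∑ j ∈ t, w j) / (w a + ∑ j ∈ t, w j)) • y = x := by
          have := Finset.centerMass_insert (w := w) a t id hna (ne_of_gt hspos)
          rw [hcm] at this; rw [this]; simp [hy]
        have hyV : y ∈ convexHull ℝ (V : Set E) :=
          t.centerMass_mem_convexHull (fun j hj => le_of_lt (hw j (Finset.mem_insert_of_mem hj)))
            hspos (fun j hj => hsub (by simp [hj]))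
        have haV' : a ∈ convexHull ℝ (V : Set E) := subset_convexHull ℝ _ haV
        have hseg : x ∈ openSegment ℝ a y :=
          ⟨w a / (w a + ∑ j ∈ t, w j), (∑ j ∈ t, w j) / (w a + ∑ j ∈ t, w j),
            div_pos hwa htot, div_pos hspos htot, by field_simp, hcm'⟩
        obtain ⟨haF, hyF⟩ := And.intro (hF.2 haV' hyV hx hseg) (hF.right_mem_of_mem_openSegment haV' hyV hx hseg)
        have htF : (t : Set E) ⊆ F := ih
          (fun z hz => hsub (Finset.mem_insert_of_mem (by exact_mod_cast hz)))
          w (fun j hj => hw j (Finset.mem_insert_of_mem hj)) y hyF rfl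
        intro z hz
        rcases Finset.mem_insert.1 (by exact_mod_cast hz) with rfl | hz'
        · exact haF
        · exact htF hz'
  intro x hx
  obtain ⟨w, hw0, hw1, hcm⟩ := Finset.mem_convexHull.1 (hF.1 hx)
  set t : Finset E := {y ∈ V | w y ≠ 0} with ht
  have hcmt : t.centerMass w id = x := by
    rw [ht, Finset.centerMass_filter_ne_zero]; exact hcm
  have hsum : ∑ y ∈ t, w y = 1 := by
    rw [ht, Finset.sum_filter_ne_zero]; exact hw1
  have hpos : ∀ y ∈ t, 0 < w y := by
    intro y hy
    rw [ht, Finset.mem_filter] at hy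
    exact lt_of_le_of_ne (hw0 y hy.1) (Ne.symm hy.2)
  have htV : (t : Set E) ⊆ (V : Set E) := by
    intro z hz; rw [ht] at hz; simp only [Finset.coe_filter, Set.mem_setOf_eq] at hz
    exact_mod_cast hz.1
  have htF : (t : Set E) ⊆ F := claim t htV w hpos x hx hcmt
  have : x ∈ convexHull ℝ (t : Set E) := by
    rw [← hcmt]
    exact t.centerMass_id_mem_convexHull (fun j hj => le_of_lt (hpos j hj)) (by rw [hsum]; norm_num)
  exact convexHull_mono (Set.subset_inter htV htF) this

lemma aux_equiv {E : Type*} [NormedAddCommGroup E] [InnerProductSpace ℝ E]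
    [FiniteDimensional ℝ E] (W : Submodule ℝ E) (ρ ε : ℝ) (hρ : 0 < ρ) (hε : 0 < ε) :
    ∃ A : E ≃ₗ[ℝ] E,
      (∀ z : E, A z = ρ • (orthogonalProjection W z : E)
        + ε • (orthogonalProjection Wᗮ z : E)) ∧
      (∀ y ∈ W, A.symm y = ρ⁻¹ • y) := by
  classical
  set pW : E →ₗ[ℝ] E := W.subtype ∘ₗ (orthogonalProjection W).toLinearMap with hpW
  set pO : E →ₗ[ℝ] E := Wᗮ.subtype ∘ₗ (orthogonalProjection Wᗮ).toLinearMap with hpO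
  have hWval : ∀ z : E, pW z = (orthogonalProjection W z : E) := fun z => rfl
  have hOval : ∀ z : E, pO z = (orthogonalProjection Wᗮ z : E) := fun z => rfl
  have hWW : ∀ z : E, pW (pW z) = pW z := by
    intro z
    simp only [hWval]
    exact congrArg _ (orthogonalProjection_mem_subspace_eq_self (orthogonalProjection W z))
  have hOO : ∀ z : E, pO (pO z) = pO z := by
    intro z
    simp only [hOval]
    exact congrArg _ (orthogonalProjection_mem_subspace_eq_self (orthogonalProjection Wᗮ z))
  have hWO : ∀ z : E, pW (pO z) = 0 := by
    intro z
    simp only [hWval, hOval]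
    have := orthogonalProjection_mem_subspace_orthogonalComplement_eq_zero
      (K := W) (SetLike.coe_mem (orthogonalProjection Wᗮ z))
    rw [this]; simp
  have hOW : ∀ z : E, pO (pW z) = 0 := by
    intro z
    simp only [hWval, hOval]
    have hmem : (orthogonalProjection W z : E) ∈ (Wᗮ)ᗮ :=
      W.le_orthogonal_orthogonal (SetLike.coe_mem _)
    have := orthogonalProjection_mem_subspace_orthogonalComplement_eq_zero
      (K := Wᗮ) hmem
    rw [this]; simp
  have hsum : ∀ z : E, pW z + pO z = z := fun z =>
    W.starProjection_add_starProjection_orthogonal z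
  set f : E →ₗ[ℝ] E := ρ • pW + ε • pO with hf
  set g : E →ₗ[ℝ] E := ρ⁻¹ • pW + ε⁻¹ • pO with hg
  have hfg : f ∘ₗ g = LinearMap.id := by
    apply LinearMap.ext
    intro z
    simp only [LinearMap.comp_apply, LinearMap.id_apply, hf, hg, LinearMap.add_apply,
      LinearMap.smul_apply, map_add, map_smul, hWW, hOO, hWO, hOW, smul_zero, add_zero, zero_add,
      smul_smul, mul_inv_cancel₀ (ne_of_gt hρ), mul_inv_cancel₀ (ne_of_gt hε),
      inv_mul_cancel₀ (ne_of_gt hρ), inv_mul_cancel₀ (ne_of_gt hε), one_smul]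
    exact hsum z
  have hgf : g ∘ₗ f = LinearMap.id := by
    apply LinearMap.ext
    intro z
    simp only [LinearMap.comp_apply, LinearMap.id_apply, hf, hg, LinearMap.add_apply,
      LinearMap.smul_apply, map_add, map_smul, hWW, hOO, hWO, hOW, smul_zero, add_zero, zero_add,
      smul_smul, mul_inv_cancel₀ (ne_of_gt hρ), mul_inv_cancel₀ (ne_of_gt hε),
      inv_mul_cancel₀ (ne_of_gt hρ), inv_mul_cancel₀ (ne_of_gt hε), one_smul]
    exact hsum z
  refine ⟨LinearEquiv.ofLinear f g hfg hgf, fun z => rfl, fun y hy => ?_⟩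
  show g y = ρ⁻¹ • y
  have h1 : pW y = y := by
    simp only [hWval]; exact W.starProjection_eq_self_iff.2 hy
  have h2 : pO y = 0 := by
    simp only [hOval]
    have := orthogonalProjection_mem_subspace_orthogonalComplement_eq_zero
      (K := Wᗮ) (W.le_orthogonal_orthogonal hy)
    rw [this]; simp
  simp [hg, h1, h2]

theorem stmt14 (d i : ℕ) (hd : 2 ≤ d) (hi : i ≤ d - 2)
    (V : Finset (EuclideanSpace ℝ (Fin d)))
    -- P = conv(V) is a d-polytope
    (hdim : Module.finrank ℝ
      (affineSpan ℝ (V : Set (EuclideanSpace ℝ (Fin d)))).direction = d) :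
    -- P is weakly (i, i+1)-scribable: some affine image of P (a realization of P)
    -- is weakly i-avoiding and weakly (i+1)-cutting with respect to the unit sphere
    ∃ T : EuclideanSpace ℝ (Fin d) ≃ᵃ[ℝ] EuclideanSpace ℝ (Fin d),
      (∀ F : Set (EuclideanSpace ℝ (Fin d)),
        IsExtreme ℝ (convexHull ℝ (V : Set (EuclideanSpace ℝ (Fin d)))) F →
        Module.finrank ℝ (affineSpan ℝ F).direction = i + 1 →
        ((affineSpan ℝ (⇑T '' F) : Set (EuclideanSpace ℝ (Fin d))) ∩
          Metric.closedBall 0 1).Nonempty) ∧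
      (∀ F : Set (EuclideanSpace ℝ (Fin d)),
        IsExtreme ℝ (convexHull ℝ (V : Set (EuclideanSpace ℝ (Fin d)))) F →
        Module.finrank ℝ (affineSpan ℝ F).direction = i →
        (affineSpan ℝ (⇑T '' F) : Set (EuclideanSpace ℝ (Fin d))) ∩
          Metric.ball 0 1 = ∅) := by
  classical
  have hfr : finrank ℝ (EuclideanSpace ℝ (Fin d)) = d := finrank_euclideanSpace_fin
  have hid : i + 1 ≤ d - 1 := by omega
  -- families of vertex subsets of given span rank
  set 𝒮 : ℕ → Finset (Finset (EuclideanSpace ℝ (Fin d))) := fun k => V.powerset.filter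
    (fun S => S.Nonempty ∧ finrank ℝ (affineSpan ℝ (S : Set (EuclideanSpace ℝ (Fin d)))).direction = k) with h𝒮
  have h𝒮rank : ∀ k, ∀ S ∈ 𝒮 k, finrank ℝ (affineSpan ℝ (S : Set (EuclideanSpace ℝ (Fin d)))).direction = k := by
    intro k S hS
    exact ((Finset.mem_filter.1 hS).2).2
  have h𝒮ne : ∀ k, ∀ S ∈ 𝒮 k, S.Nonempty := fun k S hS => ((Finset.mem_filter.1 hS).2).1
  set 𝒟 : Finset (Submodule ℝ (EuclideanSpace ℝ (Fin d))) :=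
    (𝒮 i ∪ 𝒮 (i+1)).image (fun S : Finset (EuclideanSpace ℝ (Fin d)) => (affineSpan ℝ (S : Set (EuclideanSpace ℝ (Fin d)))).direction) with h𝒟
  have h𝒟le : ∀ D ∈ 𝒟, finrank ℝ D + (d - i - 1) ≤ d := by
    intro D hD
    obtain ⟨S, hS, rfl⟩ := Finset.mem_image.1 hD
    rcases Finset.mem_union.1 hS with hS' | hS'
    · rw [h𝒮rank i S hS']; omega
    · rw [h𝒮rank (i+1) S hS']; omega
  -- the generic direction subspace W
  obtain ⟨W, hWrank, hWdisj⟩ := aux_subspace 𝒟 (d - i - 1) (by rw [hfr]; omega)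
    (by rw [hfr]; exact h𝒟le)
  -- generic translation direction u
  have hℬ : ∀ B ∈ (𝒮 i).image (fun S : Finset (EuclideanSpace ℝ (Fin d)) => (affineSpan ℝ (S : Set (EuclideanSpace ℝ (Fin d)))).direction ⊔ W), B ≠ ⊤ := by
    intro B hB
    obtain ⟨S, hS, rfl⟩ := Finset.mem_image.1 hB
    set D := (affineSpan ℝ (S : Set (EuclideanSpace ℝ (Fin d)))).direction with hDdef
    have hDW : D ⊓ W = ⊥ := hWdisj D (Finset.mem_image_of_mem _ (Finset.mem_union_left _ hS))
    have hr : finrank ℝ (D ⊔ W : Submodule ℝ (EuclideanSpace ℝ (Fin d))) + finrank ℝ (D ⊓ W : Submodule ℝ (EuclideanSpace ℝ (Fin d)))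
        = finrank ℝ D + finrank ℝ W := Submodule.finrank_sup_add_finrank_inf_eq D W
    rw [hDW, finrank_bot, hWrank, h𝒮rank i S hS] at hr
    intro htop
    rw [htop, finrank_top, hfr] at hr
    omega
  obtain ⟨u, hu⟩ := aux_notmem _ hℬ
  -- generic translation c = t • u
  have hBadFin : (⋃ S ∈ (𝒮 i : Set (Finset (EuclideanSpace ℝ (Fin d)))),
      {t : ℝ | ∃ x ∈ affineSpan ℝ (S : Set (EuclideanSpace ℝ (Fin d))), x - t • u ∈ W}).Finite := by
    apply Set.Finite.biUnion ((𝒮 i).finite_toSet)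
    intro S hS
    apply Set.Subsingleton.finite
    intro t₁ ht₁ t₂ ht₂
    obtain ⟨x₁, hx₁, hw₁⟩ := ht₁
    obtain ⟨x₂, hx₂, hw₂⟩ := ht₂
    by_contra hne
    set D := (affineSpan ℝ (S : Set (EuclideanSpace ℝ (Fin d)))).direction with hDdef
    have hxx : x₁ - x₂ ∈ D := AffineSubspace.vsub_mem_direction hx₁ hx₂
    have hmem : (t₁ - t₂) • u ∈ D ⊔ W := by
      have h1 : (x₁ - x₂) - ((x₁ - t₁ • u) - (x₂ - t₂ • u)) ∈ D ⊔ W :=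
        Submodule.sub_mem _ (Submodule.mem_sup_left hxx)
          (Submodule.mem_sup_right (Submodule.sub_mem _ hw₁ hw₂))
      have : (x₁ - x₂) - ((x₁ - t₁ • u) - (x₂ - t₂ • u)) = (t₁ - t₂) • u := by
        rw [sub_smul]; abel
      rwa [this] at h1
    have huDW : u ∈ D ⊔ W := by
      have := Submodule.smul_mem _ (t₁ - t₂)⁻¹ hmem
      rwa [smul_smul, inv_mul_cancel₀ (sub_ne_zero.2 hne), one_smul] at this
    exact hu _ (Finset.mem_image_of_mem _ hS) huDW
  obtain ⟨t, ht⟩ := hBadFin.infinite_compl.nonempty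
  set c : (EuclideanSpace ℝ (Fin d)) := t • u with hcdef
  have hc : ∀ S ∈ 𝒮 i, ∀ x ∈ affineSpan ℝ (S : Set (EuclideanSpace ℝ (Fin d))), x - c ∉ W := by
    intro S hS x hx hxw
    exact ht (Set.mem_biUnion hS ⟨x, hx, hxw⟩)
  -- intersection points for (i+1)-rank subsets, and the radius ρ
  have hpt : ∀ S ∈ 𝒮 (i+1), ∃ δ : ℝ, ∀ ρ', δ ≤ ρ' →
      ∃ pt, pt ∈ affineSpan ℝ (S : Set (EuclideanSpace ℝ (Fin d))) ∧ pt - c ∈ W ∧ ‖pt - c‖ ≤ ρ' := by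
    intro S hS
    set D := (affineSpan ℝ (S : Set (EuclideanSpace ℝ (Fin d)))).direction with hDdef
    have hDW : D ⊓ W = ⊥ := hWdisj D (Finset.mem_image_of_mem _ (Finset.mem_union_right _ hS))
    have hsup : D ⊔ W = ⊤ := by
      apply Submodule.eq_top_of_finrank_eq
      have hr : finrank ℝ (D ⊔ W : Submodule ℝ (EuclideanSpace ℝ (Fin d))) + finrank ℝ (D ⊓ W : Submodule ℝ (EuclideanSpace ℝ (Fin d)))
          = finrank ℝ D + finrank ℝ W := Submodule.finrank_sup_add_finrank_inf_eq D W
      rw [hDW, finrank_bot, hWrank, h𝒮rank (i+1) S hS] at hr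
      rw [hfr]; omega
    obtain ⟨a, ha⟩ := h𝒮ne (i+1) S hS
    have haspan : a ∈ affineSpan ℝ (S : Set (EuclideanSpace ℝ (Fin d))) := subset_affineSpan ℝ _ (by exact_mod_cast ha)
    have : c - a ∈ D ⊔ W := by rw [hsup]; trivial
    obtain ⟨v, hv, w, hw, hvw⟩ := Submodule.mem_sup.1 this
    refine ⟨‖(v + a) - c‖, fun ρ' hρ' => ⟨v + a, ?_, ?_, hρ'⟩⟩
    · have := AffineSubspace.vadd_mem_of_mem_direction hv haspan
      simpa using this
    · have : (v + a) - c = -w := by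
        have : c - a = v + w := hvw.symm
        have hc' : c = v + w + a := by rw [← this]; abel
        rw [hc']; abel
      rw [this]; exact Submodule.neg_mem _ hw
  -- the compact core and the thickness ε
  obtain ⟨ρ, hρpos, hρ⟩ := aux_up (𝒮 (i+1))
    (fun S ρ => ∃ pt, pt ∈ affineSpan ℝ (S : Set (EuclideanSpace ℝ (Fin d))) ∧ pt - c ∈ W ∧ ‖pt - c‖ ≤ ρ) hpt
  set K' : Set (EuclideanSpace ℝ (Fin d)) := Metric.closedBall c ρ ∩ {x | x - c ∈ W} with hK'def
  have hK'comp : IsCompact K' := by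
    apply (isCompact_closedBall c ρ).inter_right
    exact W.closed_of_finiteDimensional.preimage (continuous_id.sub continuous_const)
  have hdisjall : ∀ S ∈ 𝒮 i, ∃ δ : ℝ, 0 < δ ∧ ∀ ε', 0 < ε' → ε' ≤ δ →
      Disjoint (Metric.thickening ε' K')
        (Metric.thickening ε' (affineSpan ℝ (S : Set (EuclideanSpace ℝ (Fin d))) : Set (EuclideanSpace ℝ (Fin d)))) := by
    intro S hS
    have hdisj : Disjoint K' (affineSpan ℝ (S : Set (EuclideanSpace ℝ (Fin d))) : Set (EuclideanSpace ℝ (Fin d))) := by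
      rw [Set.disjoint_left]
      rintro x ⟨-, hxW⟩ hxspan
      exact hc S hS x hxspan hxW
    obtain ⟨δ, hδpos, hδ⟩ := hdisj.exists_thickenings hK'comp
      (affineSpan ℝ (S : Set (EuclideanSpace ℝ (Fin d)))).closed_of_finiteDimensional
    exact ⟨δ, hδpos, fun ε' hε'pos hε'le => hδ.mono
      (Metric.thickening_mono hε'le _) (Metric.thickening_mono hε'le _)⟩
  obtain ⟨ε, hεpos, hε⟩ := aux_down (𝒮 i)
    (fun S ε => Disjoint (Metric.thickening ε K')
      (Metric.thickening ε (affineSpan ℝ (S : Set (EuclideanSpace ℝ (Fin d))) : Set (EuclideanSpace ℝ (Fin d))))) hdisjall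
  -- the ellipsoid map
  obtain ⟨A, hA, hAsymm⟩ := aux_equiv W ρ ε hρpos hεpos
  set T : (EuclideanSpace ℝ (Fin d)) ≃ᵃ[ℝ] (EuclideanSpace ℝ (Fin d)) := (AffineEquiv.constVAdd ℝ (EuclideanSpace ℝ (Fin d)) (-c)).trans A.symm.toAffineEquiv
    with hTdef
  have hTapp : ∀ x : (EuclideanSpace ℝ (Fin d)), T x = A.symm (x - c) := by
    intro x
    simp [hTdef, AffineEquiv.trans_apply, sub_eq_neg_add]
  have hkey : ∀ F : Set (EuclideanSpace ℝ (Fin d)), IsExtreme ℝ (convexHull ℝ (V : Set (EuclideanSpace ℝ (Fin d)))) F → F.Nonempty →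
      ∃ S : Finset (EuclideanSpace ℝ (Fin d)), S ⊆ V ∧ S.Nonempty ∧
        affineSpan ℝ F = affineSpan ℝ (S : Set (EuclideanSpace ℝ (Fin d))) := by
    intro F hFext hFne
    set S : Finset (EuclideanSpace ℝ (Fin d)) := V.filter (· ∈ F) with hSdef
    have hScoe : (S : Set (EuclideanSpace ℝ (Fin d))) = (V : Set (EuclideanSpace ℝ (Fin d))) ∩ F := by
      ext x; simp [hSdef]
    have hsub2 : F ⊆ convexHull ℝ ((V : Set (EuclideanSpace ℝ (Fin d))) ∩ F) := aux_extreme_sub V F hFext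
    have hspan : affineSpan ℝ F = affineSpan ℝ (S : Set (EuclideanSpace ℝ (Fin d))) := by
      rw [hScoe]
      refine le_antisymm ?_ (affineSpan_mono ℝ Set.inter_subset_right)
      rw [affineSpan_le]
      exact hsub2.trans (convexHull_subset_affineSpan _)
    refine ⟨S, Finset.filter_subset _ _, ?_, hspan⟩
    obtain ⟨x₀, hx₀⟩ := hFne
    have h1 := hsub2 hx₀
    rw [← hScoe] at h1
    have h2 : ((S : Set (EuclideanSpace ℝ (Fin d)))).Nonempty := convexHull_nonempty_iff.1 ⟨x₀, h1⟩
    exact Finset.coe_nonempty.1 h2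
  refine ⟨T, ?_, ?_⟩
  · -- weakly cutting
    intro F hFext hFrank
    have hFne : F.Nonempty := by
      rcases Set.eq_empty_or_nonempty F with rfl | h
      · rw [AffineSubspace.span_empty, AffineSubspace.direction_bot, finrank_bot] at hFrank
        omega
      · exact h
    obtain ⟨S, hSV, hSne, hspan⟩ := hkey F hFext hFne
    have hSmem : S ∈ 𝒮 (i+1) := Finset.mem_filter.2
      ⟨Finset.mem_powerset.2 hSV, hSne, by rw [← hspan]; exact hFrank⟩
    obtain ⟨pt, hptspan, hptW, hptnorm⟩ := hρ S hSmem ρ le_rfl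
    refine ⟨T pt, ?_, ?_⟩
    · have h1 : pt ∈ affineSpan ℝ F := by rw [hspan]; exact hptspan
      have h2 : T pt ∈ (affineSpan ℝ F).map (T : (EuclideanSpace ℝ (Fin d)) →ᵃ[ℝ] (EuclideanSpace ℝ (Fin d))) :=
        AffineSubspace.mem_map.2 ⟨pt, h1, rfl⟩
      rw [AffineSubspace.map_span] at h2
      simpa using h2
    · rw [Metric.mem_closedBall, dist_zero_right, hTapp, hAsymm _ hptW, norm_smul, Real.norm_eq_abs]
      have habs : |ρ⁻¹| = ρ⁻¹ := abs_of_pos (by positivity)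
      rw [habs]
      calc ρ⁻¹ * ‖pt - c‖ ≤ ρ⁻¹ * ρ :=
            mul_le_mul_of_nonneg_left hptnorm (by positivity)
        _ = 1 := inv_mul_cancel₀ (ne_of_gt hρpos)
  · -- weakly avoiding
    intro F hFext hFrank
    rcases Set.eq_empty_or_nonempty F with rfl | hFne
    · simp
    obtain ⟨S, hSV, hSne, hspan⟩ := hkey F hFext hFne
    have hSmem : S ∈ 𝒮 i := Finset.mem_filter.2
      ⟨Finset.mem_powerset.2 hSV, hSne, by rw [← hspan]; exact hFrank⟩
    apply Set.eq_empty_iff_forall_notMem.2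
    rintro z ⟨hz1, hz2⟩
    rw [Metric.mem_ball, dist_zero_right] at hz2
    have hz1' : z ∈ (affineSpan ℝ F).map (T : (EuclideanSpace ℝ (Fin d)) →ᵃ[ℝ] (EuclideanSpace ℝ (Fin d))) := by
      rw [AffineSubspace.map_span]
      simpa using hz1
    obtain ⟨x, hx, hTx⟩ := AffineSubspace.mem_map.1 hz1'
    have hxz : A.symm (x - c) = z := by
      rw [← hTapp]
      exact_mod_cast hTx
    have hxc : x - c = A z := by
      have h := congrArg A hxz
      rwa [A.apply_symm_apply] at h
    have hAz := hA z
    set pWz : (EuclideanSpace ℝ (Fin d)) := (orthogonalProjection W z : (EuclideanSpace ℝ (Fin d))) with hpWzdef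
    set pOz : (EuclideanSpace ℝ (Fin d)) := (orthogonalProjection Wᗮ z : (EuclideanSpace ℝ (Fin d))) with hpOzdef
    have hnormW : ‖pWz‖ ≤ ‖z‖ := by
      have h1 : ‖orthogonalProjection W z‖ ≤ ‖orthogonalProjection W‖ * ‖z‖ :=
        (orthogonalProjection W).le_opNorm z
      have h2 : ‖orthogonalProjection W‖ * ‖z‖ ≤ 1 * ‖z‖ :=
        mul_le_mul_of_nonneg_right (orthogonalProjection_norm_le W) (norm_nonneg z)
      have h3 : ‖pWz‖ = ‖orthogonalProjection W z‖ := rfl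
      rw [h3]
      linarith
    have hnormO : ‖pOz‖ ≤ ‖z‖ := by
      have h1 : ‖orthogonalProjection Wᗮ z‖ ≤ ‖orthogonalProjection Wᗮ‖ * ‖z‖ :=
        (orthogonalProjection Wᗮ).le_opNorm z
      have h2 : ‖orthogonalProjection Wᗮ‖ * ‖z‖ ≤ 1 * ‖z‖ :=
        mul_le_mul_of_nonneg_right (orthogonalProjection_norm_le Wᗮ) (norm_nonneg z)
      have h3 : ‖pOz‖ = ‖orthogonalProjection Wᗮ z‖ := rfl
      rw [h3]
      linarith
    set q : (EuclideanSpace ℝ (Fin d)) := c + ρ • pWz with hqdef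
    have hqK' : q ∈ K' := by
      constructor
      · rw [Metric.mem_closedBall, dist_eq_norm]
        have : q - c = ρ • pWz := by rw [hqdef]; abel
        rw [this, norm_smul, Real.norm_eq_abs, abs_of_pos hρpos]
        calc ρ * ‖pWz‖ ≤ ρ * 1 :=
              mul_le_mul_of_nonneg_left (le_trans hnormW (le_of_lt hz2)) (le_of_lt hρpos)
          _ = ρ := mul_one ρ
      · show q - c ∈ W
        have : q - c = ρ • pWz := by rw [hqdef]; abel
        rw [this]
        exact W.smul_mem ρ (SetLike.coe_mem _)
    have hdistxq : dist x q < ε := by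
      have hsub : x - q = ε • pOz := by
        have : x - q = (x - c) - ρ • pWz := by rw [hqdef]; abel
        rw [this, hxc, hAz]
        abel
      rw [dist_eq_norm, hsub, norm_smul, Real.norm_eq_abs, abs_of_pos hεpos]
      calc ε * ‖pOz‖ ≤ ε * ‖z‖ := mul_le_mul_of_nonneg_left hnormO (le_of_lt hεpos)
        _ < ε * 1 := mul_lt_mul_of_pos_left hz2 hεpos
        _ = ε := mul_one ε
    have hxth1 : x ∈ Metric.thickening ε K' :=
      Metric.mem_thickening_iff.2 ⟨q, hqK', hdistxq⟩
    have hxspan : x ∈ (affineSpan ℝ (S : Set (EuclideanSpace ℝ (Fin d))) : Set (EuclideanSpace ℝ (Fin d))) := by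
      rw [hspan] at hx
      exact hx
    have hxth2 : x ∈ Metric.thickening ε (affineSpan ℝ (S : Set (EuclideanSpace ℝ (Fin d))) : Set (EuclideanSpace ℝ (Fin d))) :=
      Metric.self_subset_thickening hεpos _ hxspan
    exact Set.disjoint_left.1 (hε S hSmem ε hεpos le_rfl) hxth1 hxth2
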